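/- Let ω₀, Γ, f, d, c > 0 and let ω* ∈ ℂ be either root of the quadratic ω² + iΓω − ω₀² = 0 (these are the resonances of the Lorentz refractive index; note ω* ≠ 0). Then for every ε > 0 the set of complex numbers ω with |ω − ω*| < ε for which there exists a positive integer m with (f d²/c²)·ω² = m²π²·(ω₀² − ω² − iΓω) is infinite. That is, the natural mode frequencies of a single dispersive slab cluster at each resonance of the refractive index. -/

import Mathlib

open Complex Real Topology

/-- **Clustering of natural mode frequencies at a Lorentz resonance.**
For a single dispersive slab (Lorentz model with resonance frequency `ω₀ > 0`,
damping `Γ > 0`, oscillator strength `f > 0`, thickness `d > 0`, light speed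
`c > 0`), let `ω*` be either root of `ω² + iΓω − ω₀² = 0`. Then every
neighbourhood of `ω*` contains infinitely many solutions `ω` of the natural-mode
equation `(f d²/c²)·ω² = m²π²·(ω₀² − ω² − iΓω)` (for some positive integer `m`):
the natural frequencies cluster at each resonance of the refractive index. -/
theorem natural_modes_cluster_at_resonance
    (ω₀ Γ f d c : ℝ) (hω₀ : 0 < ω₀) (hΓ : 0 < Γ) (hf : 0 < f) (hd : 0 < d) (hc : 0 < c)
    (ωs : ℂ) (hωs : ωs ^ 2 + Complex.I * (Γ : ℂ) * ωs - (ω₀ : ℂ) ^ 2 = 0) :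
    ∀ ε : ℝ, 0 < ε →
      {ω : ℂ | ‖ω - ωs‖ < ε ∧ ∃ m : ℕ, 0 < m ∧
        ((f : ℂ) * (d : ℂ) ^ 2 / (c : ℂ) ^ 2) * ω ^ 2 =
          (m : ℂ) ^ 2 * (Real.pi : ℂ) ^ 2 *
            ((ω₀ : ℂ) ^ 2 - ω ^ 2 - Complex.I * (Γ : ℂ) * ω)}.Infinite := by
  intro ε hε
  set num : ℂ → ℂ := fun ω => (ω₀ : ℂ) ^ 2 - ω ^ 2 - Complex.I * (Γ : ℂ) * ω with hnumdef
  set h : ℂ → ℂ := fun ω => num ω / ω ^ 2 with hhdef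
  have hω₀c : (ω₀ : ℂ) ≠ 0 := by
    exact_mod_cast (Complex.ofReal_ne_zero.mpr hω₀.ne')
  have hωs0 : ωs ≠ 0 := by
    intro h0
    rw [h0] at hωs
    simp at hωs
    exact hω₀c (by exact_mod_cast hωs)
  have hnumωs : num ωs = 0 := by
    simp only [hnumdef]
    linear_combination -hωs
  have hhωs : h ωs = 0 := by
    simp [hhdef, hnumωs]
  -- analyticity
  have hnumA : AnalyticAt ℂ num ωs := by
    apply AnalyticAt.sub
    apply AnalyticAt.sub
    · exact analyticAt_const
    · exact (analyticAt_id.pow 2)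
    · exact analyticAt_const.mul analyticAt_id
  have hA : AnalyticAt ℂ h ωs := hnumA.div (analyticAt_id.pow 2) (pow_ne_zero 2 hωs0)
  -- not locally constant
  rcases hA.eventually_constant_or_nhds_le_map_nhds with hconst | hmap
  · exfalso
    have hne : ∀ᶠ z in 𝓝 ωs, z ≠ 0 := eventually_ne_nhds hωs0
    have hz : ∀ᶠ z in 𝓝 ωs, num z = 0 := by
      filter_upwards [hconst, hne] with z h1 h2
      rw [hhωs] at h1
      have : num z / z ^ 2 = 0 := h1
      rcases div_eq_zero_iff.mp this with h | h
      · exact h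
      · exact absurd (pow_eq_zero_iff (n := 2) (by norm_num) |>.mp h) h2
    set P : Polynomial ℂ := Polynomial.C ((ω₀ : ℂ) ^ 2) - Polynomial.X ^ 2
        - Polynomial.C (Complex.I * (Γ : ℂ)) * Polynomial.X with hPdef
    have hco : P.coeff 2 = -1 := by
      simp only [hPdef, Polynomial.coeff_sub, Polynomial.coeff_C_mul,
        Polynomial.coeff_X, Polynomial.coeff_X_pow, Polynomial.coeff_C]
      norm_num
    have hPne : P ≠ 0 := by
      intro h0
      rw [h0] at hco
      simp at hco
    have hfin : {x : ℂ | Polynomial.IsRoot P x}.Finite := Polynomial.finite_setOf_isRoot hPne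
    have hsub : {z : ℂ | num z = 0} ⊆ {x : ℂ | Polynomial.IsRoot P x} := by
      intro z hz'
      simp only [Set.mem_setOf_eq, Polynomial.IsRoot, hPdef]
      simp only [Polynomial.eval_sub, Polynomial.eval_mul, Polynomial.eval_pow,
        Polynomial.eval_C, Polynomial.eval_X]
      exact hz'
    have hinf : {z : ℂ | num z = 0}.Infinite := infinite_of_mem_nhds ωs hz
    exact hinf (hfin.subset hsub)
  · rw [hhωs] at hmap
    have hball : h '' Metric.ball ωs ε ∈ 𝓝 (0 : ℂ) :=
      hmap (Filter.image_mem_map (Metric.ball_mem_nhds _ hε))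
    obtain ⟨δ, hδ, hsub⟩ := Metric.mem_nhds_iff.mp hball
    set Kc : ℂ := (f : ℂ) * (d : ℂ) ^ 2 / (c : ℂ) ^ 2 with hKcdef
    have hKcne : Kc ≠ 0 := by
      simp only [hKcdef]
      apply div_ne_zero
      · exact mul_ne_zero (Complex.ofReal_ne_zero.mpr hf.ne')
          (pow_ne_zero 2 (Complex.ofReal_ne_zero.mpr hd.ne'))
      · exact pow_ne_zero 2 (Complex.ofReal_ne_zero.mpr hc.ne')
    set v : ℕ → ℂ := fun m => Kc / ((m : ℂ) ^ 2 * (Real.pi : ℂ) ^ 2) with hvdef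
    obtain ⟨M, hM⟩ := exists_nat_gt (f * d ^ 2 / c ^ 2 / (δ * Real.pi ^ 2))
    have hvmem : ∀ n : ℕ, v (M + n + 1) ∈ Metric.ball (0 : ℂ) δ := by
      intro n
      have hm1 : (1 : ℝ) ≤ (M + n + 1 : ℕ) := by exact_mod_cast Nat.one_le_iff_ne_zero.mpr (by omega)
      have hmM : (M : ℝ) < ((M + n + 1 : ℕ) : ℝ) := by push_cast; linarith
      have hK : (0 : ℝ) < f * d ^ 2 / c ^ 2 := by positivity
      have hπ : (0 : ℝ) < Real.pi ^ 2 := by positivity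
      simp only [Metric.mem_ball, dist_zero_right, hvdef]
      rw [norm_div]
      have hden : ‖((M + n + 1 : ℕ) : ℂ) ^ 2 * (Real.pi : ℂ) ^ 2‖
          = ((M + n + 1 : ℕ) : ℝ) ^ 2 * Real.pi ^ 2 := by
        rw [norm_mul, norm_pow, norm_pow]
        norm_cast
        simp [_root_.abs_of_nonneg Real.pi_pos.le]
      have hKc : ‖Kc‖ = f * d ^ 2 / c ^ 2 := by
        simp only [hKcdef]
        rw [norm_div, norm_mul, norm_pow, norm_pow]
        simp [_root_.abs_of_nonneg hf.le, _root_.abs_of_nonneg hd.le, _root_.abs_of_nonneg hc.le]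
      rw [hden, hKc]
      rw [div_lt_iff₀ (by positivity)]
      have h1 : f * d ^ 2 / c ^ 2 / (δ * Real.pi ^ 2) < ((M + n + 1 : ℕ) : ℝ) := lt_trans hM hmM
      have h2 : f * d ^ 2 / c ^ 2 < ((M + n + 1 : ℕ) : ℝ) * (δ * Real.pi ^ 2) := by
        rw [div_lt_iff₀ (by positivity)] at h1
        linarith
      nlinarith [sq_nonneg (((M + n + 1 : ℕ) : ℝ) - 1)]
    have H : ∀ n : ℕ, ∃ ω : ℂ, ‖ω - ωs‖ < ε ∧ h ω = v (M + n + 1) := by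
      intro n
      obtain ⟨ω, hω1, hω2⟩ := hsub (hvmem n)
      refine ⟨ω, ?_, hω2⟩
      simpa [Metric.mem_ball, Complex.dist_eq] using hω1
    choose g hg using H
    have hvne : ∀ n : ℕ, v (M + n + 1) ≠ 0 := by
      intro n
      simp only [hvdef]
      apply div_ne_zero hKcne
      apply mul_ne_zero
      · exact pow_ne_zero 2 (Nat.cast_ne_zero.mpr (by omega : M + n + 1 ≠ 0))
      · exact pow_ne_zero 2 (by exact_mod_cast Complex.ofReal_ne_zero.mpr Real.pi_ne_zero)
    have hgne : ∀ n : ℕ, g n ≠ 0 := by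
      intro n h0
      have := (hg n).2
      rw [h0] at this
      simp only [hhdef] at this
      rw [show ((0:ℂ)^2) = 0 by norm_num, div_zero] at this
      exact hvne n this.symm
    refine Set.infinite_of_injective_forall_mem (f := g) ?_ ?_
    · intro a b hab
      have h1 : v (M + a + 1) = v (M + b + 1) := ((hg a).2.symm.trans (by rw [hab])).trans (hg b).2
      simp only [hvdef] at h1
      have hπne : ((Real.pi : ℂ)) ^ 2 ≠ 0 := pow_ne_zero 2 (by exact_mod_cast Complex.ofReal_ne_zero.mpr Real.pi_ne_zero)
      have hda : ((M + a + 1 : ℕ) : ℂ) ^ 2 * (Real.pi : ℂ) ^ 2 ≠ 0 :=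
        mul_ne_zero (pow_ne_zero 2 (Nat.cast_ne_zero.mpr (by omega))) hπne
      have hdb : ((M + b + 1 : ℕ) : ℂ) ^ 2 * (Real.pi : ℂ) ^ 2 ≠ 0 :=
        mul_ne_zero (pow_ne_zero 2 (Nat.cast_ne_zero.mpr (by omega))) hπne
      rw [div_eq_div_iff hda hdb] at h1
      have h2 : ((M + a + 1 : ℕ) : ℂ) ^ 2 = ((M + b + 1 : ℕ) : ℂ) ^ 2 := by
        have := mul_left_cancel₀ hKcne h1
        exact mul_right_cancel₀ hπne this.symm
      have h3 : ((M + a + 1) ^ 2 : ℕ) = ((M + b + 1) ^ 2 : ℕ) := by exact_mod_cast h2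
      have h4 : M + a + 1 = M + b + 1 := Nat.pow_left_injective (by norm_num) h3
      omega
    · intro n
      refine ⟨(hg n).1, M + n + 1, by omega, ?_⟩
      have heq := (hg n).2
      have hωne : (g n) ^ 2 ≠ 0 := pow_ne_zero 2 (hgne n)
      have hπne : ((Real.pi : ℂ)) ^ 2 ≠ 0 := pow_ne_zero 2 (by exact_mod_cast Complex.ofReal_ne_zero.mpr Real.pi_ne_zero)
      have hda : ((M + n + 1 : ℕ) : ℂ) ^ 2 * (Real.pi : ℂ) ^ 2 ≠ 0 :=
        mul_ne_zero (pow_ne_zero 2 (Nat.cast_ne_zero.mpr (by omega))) hπne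
      simp only [hhdef, hvdef] at heq
      rw [div_eq_div_iff hωne hda] at heq
      simp only [hKcdef, hnumdef] at heq ⊢
      linear_combination heq.symm
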